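/- For every N ≥ 3, the unique strictly decreasing zero-mean solution of the recursion satisfies S_{N,n} ≥ x_{N,1} for all n = 1, …, N−1, and consequently 0 < x_{N,n} − x_{N,n+1} ≤ 1/x_{N,1} for all n = 1, …, N−1. -/

import Mathlib

open Finset

/-- Partial sum `S_n = x_1 + ... + x_n`. -/
noncomputable def S (x : ℕ → ℝ) (n : ℕ) : ℝ := ∑ i ∈ Finset.Icc 1 n, x i

/-- `x_1, ..., x_N` is a solution of the recursion `x_{n+1} = x_n - 1/S_n`
with all relevant partial sums nonzero. -/
def IsSolution (N : ℕ) (x : ℕ → ℝ) : Prop :=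
  ∀ n, 1 ≤ n → n ≤ N - 1 → S x n ≠ 0 ∧ x (n + 1) = x n - 1 / S x n

/-- Zero-median property: the middle value is `0` when `N` is odd, and the two middle
values are negatives of each other when `N` is even. -/
def ZeroMedian (N : ℕ) (x : ℕ → ℝ) : Prop :=
  (Odd N → x ((N + 1) / 2) = 0) ∧ (Even N → x (N / 2) = - x (N / 2 + 1))
/-- For the unique strictly decreasing zero-mean solution of the recursion,
`S_{N,n} ≥ x_{N,1}` and `0 < x_{N,n} - x_{N,n+1} ≤ 1 / x_{N,1}` for `n = 1, ..., N-1`. -/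
theorem partial_sum_and_gap_bounds (N : ℕ) (hN : 3 ≤ N) (x : ℕ → ℝ)
    (hsol : IsSolution N x) (hdec : ∀ n, 1 ≤ n → n < N → x (n + 1) < x n)
    (hmean : ∑ i ∈ Finset.Icc 1 N, x i = 0) :
    ∀ n, 1 ≤ n → n ≤ N - 1 →
      x 1 ≤ S x n ∧ 0 < x n - x (n + 1) ∧ x n - x (n + 1) ≤ 1 / x 1 := by
  have hrec : ∀ n, 1 ≤ n → n ≤ N - 1 → x (n + 1) = x n - 1 / S x n :=
    fun n h1 h2 => (hsol n h1 h2).2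
  have hSsucc : ∀ n : ℕ, S x (n + 1) = S x n + x (n + 1) := by
    intro n
    exact Finset.sum_Icc_succ_top (by omega) x
  have hSN : S x N = 0 := hmean
  have hS1 : S x 1 = x 1 := by simp [S]
  have hSpos : ∀ n, 1 ≤ n → n ≤ N - 1 → 0 < S x n := by
    intro n h1 h2
    have h3 := hdec n h1 (by omega)
    have h4 := hrec n h1 h2
    have h5 : 0 < 1 / S x n := by rw [h4] at h3; linarith
    exact one_div_pos.mp h5
  have hx1 : 0 < x 1 := by
    have := hSpos 1 le_rfl (by omega)
    rwa [hS1] at this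
  -- strict antitonicity on [1, N]
  have hanti : ∀ m k, 1 ≤ m → m < k → k ≤ N → x k < x m := by
    intro m k hm hmk hkN
    induction k with
    | zero => omega
    | succ k ih =>
      rcases Nat.lt_or_ge m k with h | h
      · have h1 := hdec k (by omega) (by omega)
        have h2 := ih h (by omega)
        linarith
      · have : m = k := by omega
        subst this
        exact hdec m hm (by omega)
  -- S x n as Ioc sum
  have hIoc : ∀ n : ℕ, S x n = ∑ i ∈ Finset.Ioc 0 n, x i := by
    intro n
    rw [S, ← Finset.Icc_add_one_left_eq_Ioc, zero_add]
  have htail : ∀ n, n ≤ N → S x n + ∑ i ∈ Finset.Ioc n N, x i = 0 := by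
    intro n hn
    have hcons := Finset.sum_Ioc_consecutive (f := x) (Nat.zero_le n) hn
    rw [hIoc n, hcons, ← hIoc N, hSN]
  -- S x (N-1) = - x N
  have hSN1 : S x (N - 1) = - x N := by
    have h1 := hSsucc (N - 1)
    have h2 : N - 1 + 1 = N := by omega
    rw [h2] at h1
    rw [hSN] at h1
    linarith
  -- key lemma : x 1 + x N ≤ 0
  have key : x 1 + x N ≤ 0 := by
    by_contra hk
    push_neg at hk
    have main : ∀ n, 1 ≤ n → n ≤ N - 1 →
        S x (N - n) < S x n ∧ 0 < x n + x (N + 1 - n) := by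
      intro n h1
      induction n, h1 using Nat.le_induction with
      | base =>
        intro _
        have e1 : N + 1 - 1 = N := by omega
        constructor
        · rw [hSN1, hS1]; linarith
        · rw [e1]; linarith
      | succ n hn ih =>
        intro h2
        obtain ⟨hu, hv⟩ := ih (by omega)
        have e1 : N + 1 - (n + 1) = N - n := by omega
        have e2 : N + 1 - n = (N - n) + 1 := by omega
        have e3 : N - (n + 1) + 1 = N - n := by omega
        have p1 : 0 < S x n := hSpos n hn (by omega)
        have p2 : 0 < S x (N - n) := hSpos (N - n) (by omega) (by omega)
        have r1 := hrec n hn (by omega)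
        have r2 := hrec (N - n) (by omega) (by omega)
        rw [e2] at hv
        have hdiv : 1 / S x n < 1 / S x (N - n) :=
          one_div_lt_one_div_of_lt p2 hu
        have hv' : 0 < x (n + 1) + x (N - n) := by
          rw [r1]
          have : x (N - n) = x (N - n + 1) + 1 / S x (N - n) := by linarith [r2]
          rw [this]
          linarith
        constructor
        · have s1 := hSsucc n
          have s2 := hSsucc (N - (n + 1))
          rw [e3] at s2
          linarith
        · rw [e1]
          exact hv'
    have hfin := main (N - 1) (by omega) le_rfl
    have e4 : N - (N - 1) = 1 := by omega
    rw [e4, hSN1, hS1] at hfin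
    linarith [hfin.1]
  -- S x n ≥ x 1 for n in [1, N-1]
  have hS1le : ∀ n, 1 ≤ n → n ≤ N - 1 → x 1 ≤ S x n := by
    intro n h1 h2
    by_cases hxn : 0 ≤ x n
    · -- head sum: S x n = S x 1 + sum over Ioc 1 n of nonneg terms
      have hcons := Finset.sum_Ioc_consecutive (f := x) (by omega : (0:ℕ) ≤ 1) h1
      have hsplit : S x 1 + ∑ i ∈ Finset.Ioc 1 n, x i = S x n := by
        rw [hIoc 1, hIoc n, hcons]
      have hnn : ∀ i ∈ Finset.Ioc 1 n, 0 ≤ x i := by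
        intro i hi
        rw [Finset.mem_Ioc] at hi
        rcases eq_or_lt_of_le hi.2 with h | h
        · rw [h]; exact hxn
        · have := hanti i n (by omega) h (by omega)
          linarith
      have := Finset.sum_nonneg hnn
      linarith [hS1 ▸ hsplit]
    · -- tail sum
      push_neg at hxn
      have hts := htail n (by omega)
      have hnn : ∀ i ∈ Finset.Ioc n N, 0 ≤ - x i := by
        intro i hi
        rw [Finset.mem_Ioc] at hi
        have := hanti n i h1 hi.1 hi.2
        linarith
      have hmem : N ∈ Finset.Ioc n N := Finset.mem_Ioc.mpr ⟨by omega, le_rfl⟩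
      have hsingle := Finset.single_le_sum hnn hmem
      have hsum : ∑ i ∈ Finset.Ioc n N, (- x i) = - ∑ i ∈ Finset.Ioc n N, x i := by
        rw [Finset.sum_neg_distrib]
      rw [hsum] at hsingle
      linarith
  intro n h1 h2
  have hg := hrec n h1 h2
  have hp := hSpos n h1 h2
  have hle := hS1le n h1 h2
  have hid : x n - x (n + 1) = 1 / S x n := by rw [hg]; ring
  refine ⟨hle, ?_, ?_⟩
  · rw [hid]; exact one_div_pos.mpr hp
  · rw [hid]; exact one_div_le_one_div_of_le hx1 hle
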